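/- There exists an uncountable subset S of ℝ that is a Sidon set, i.e. for all x₁, x₂, x₃, x₄ ∈ S, x₁ + x₂ = x₃ + x₄ implies {x₁, x₂} = {x₃, x₄}. -/

import Mathlib

theorem exists_uncountable_sidon_set :
    ∃ S : Set ℝ, ¬ S.Countable ∧
      ∀ x₁ ∈ S, ∀ x₂ ∈ S, ∀ x₃ ∈ S, ∀ x₄ ∈ S,
        x₁ + x₂ = x₃ + x₄ → ({x₁, x₂} : Set ℝ) = {x₃, x₄} := by
  classical
  set S : Set ℝ := Module.Basis.ofVectorSpaceIndex ℚ ℝ with hSdef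
  have hli : LinearIndependent ℚ ((↑) : S → ℝ) :=
    Module.Basis.ofVectorSpaceIndex.linearIndependent ℚ ℝ
  refine ⟨S, ?_, ?_⟩
  · -- uncountability
    intro hc
    have hspan : Submodule.span ℚ (Set.range ((↑) : S → ℝ)) = ⊤ := by
      rw [Subtype.range_coe, hSdef, ← Module.Basis.range_ofVectorSpace ℚ ℝ]
      exact (Module.Basis.ofVectorSpace ℚ ℝ).span_eq
    have : Countable S := hc.to_subtype
    have : Countable (Submodule.span ℚ (Set.range ((↑) : S → ℝ))) := inferInstance
    rw [hspan] at this
    have : Countable ℝ := (Equiv.ofInjective _ (fun a b h => by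
      simpa using congrArg Subtype.val h : Function.Injective
        (fun x : ℝ => (⟨x, Submodule.mem_top⟩ : (⊤ : Submodule ℚ ℝ))))).injective.comp
        (fun a b h => h) |>.countable
    exact (not_countable_iff.mpr inferInstance) this
  · intro x₁ h₁ x₂ h₂ x₃ h₃ x₄ h₄ heq
    by_cases h13 : x₁ = x₃
    · have : x₂ = x₄ := by linarith
      rw [h13, this]
    by_cases h14 : x₁ = x₄
    · have h23 : x₂ = x₃ := by linarith
      rw [h14, h23, Set.pair_comm]
    · -- contradiction with linear independence
      exfalso
      set a : S := ⟨x₁, h₁⟩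
      set b : S := ⟨x₂, h₂⟩
      set c : S := ⟨x₃, h₃⟩
      set d : S := ⟨x₄, h₄⟩
      have hg := linearIndependent_iff.mp hli
        (Finsupp.single a (1:ℚ) + Finsupp.single b 1
          - Finsupp.single c 1 - Finsupp.single d 1) ?_
      · have := DFunLike.congr_fun hg a
        simp only [Finsupp.sub_apply, Finsupp.add_apply, Finsupp.single_apply,
          Finsupp.zero_apply] at this
        have hca : ¬ (c = a) := fun h => h13 (by simpa using congrArg Subtype.val h.symm)
        have hda : ¬ (d = a) := fun h => h14 (by simpa using congrArg Subtype.val h.symm)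
        rw [if_neg hca, if_neg hda] at this
        by_cases hba : b = a
        · rw [if_pos hba] at this; norm_num at this
        · rw [if_neg hba] at this; norm_num at this
      · simp only [map_sub, map_add, Finsupp.linearCombination_single, one_smul]
        show x₁ + x₂ - x₃ - x₄ = 0
        linarith
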